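/- Let A ∈ ℝ^{d×d} be positive definite, let H ≥ 1 and φ_1, …, φ_H ∈ ℝ^d, and set w_h² = φ_hᵀ A^{-1} φ_h. Then det(A + ∑_{h=1}^{H} φ_h φ_hᵀ) ≥ det(A) · (1 + ∑_{h=1}^{H} w_h²) ≥ det(A) · ∏_{h=1}^{H} (1 + w_h²)^{1/H}. -/

import Mathlib

open Matrix Finset


lemma aux_prod_one_add {ι : Type*} (s : Finset ι) (f : ι → ℝ) (hf : ∀ i ∈ s, 0 ≤ f i) :
    1 + ∑ i ∈ s, f i ≤ ∏ i ∈ s, (1 + f i) := by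
  classical
  induction s using Finset.induction with
  | empty => simp
  | @insert a s hi ih =>
    rw [Finset.sum_insert hi, Finset.prod_insert hi]
    have hfa : 0 ≤ f a := hf a (Finset.mem_insert_self a s)
    have hs : ∀ i ∈ s, 0 ≤ f i := fun i hi' => hf i (Finset.mem_insert_of_mem hi')
    have hsum : 0 ≤ ∑ i ∈ s, f i := Finset.sum_nonneg hs
    calc 1 + (f a + ∑ i ∈ s, f i) ≤ (1 + f a) * (1 + ∑ i ∈ s, f i) := by nlinarith
    _ ≤ (1 + f a) * ∏ i ∈ s, (1 + f i) := by
        have := ih hs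
        nlinarith

lemma aux_det_one_add {n : Type*} [Fintype n] [DecidableEq n] {N : Matrix n n ℝ}
    (hN : N.PosSemidef) : 1 + N.trace ≤ (1 + N).det := by
  set U : Matrix n n ℝ := (hN.1.eigenvectorUnitary : Matrix n n ℝ) with hU
  have hUU : U * star U = 1 := (Matrix.mem_unitaryGroup_iff).mp hN.1.eigenvectorUnitary.2
  have hUU' : star U * U = 1 := (Matrix.mem_unitaryGroup_iff').mp hN.1.eigenvectorUnitary.2
  have hsp : N = U * diagonal (RCLike.ofReal ∘ hN.1.eigenvalues) * star U := hN.1.spectral_theorem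
  have hone : (1 : Matrix n n ℝ) + N = U * (1 + diagonal (RCLike.ofReal ∘ hN.1.eigenvalues)) * star U := by
    rw [mul_add, add_mul, mul_one, hUU, ← hsp]
  have hdet : (1 + N).det = ∏ i, (1 + hN.1.eigenvalues i) := by
    rw [hone, det_mul, det_mul, mul_comm, ← mul_assoc, ← det_mul, hUU', det_one, one_mul]
    have : (1 : Matrix n n ℝ) + diagonal (RCLike.ofReal ∘ hN.1.eigenvalues)
        = diagonal (fun i => 1 + hN.1.eigenvalues i) := by
      rw [← diagonal_one, diagonal_add]
      rfl
    rw [this, det_diagonal]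
  have htr : N.trace = ∑ i, hN.1.eigenvalues i := by
    conv_lhs => rw [hsp]
    rw [trace_mul_comm, ← mul_assoc, hUU', one_mul, trace_diagonal]
    rfl
  rw [hdet, htr]
  exact aux_prod_one_add _ _ (fun i _ => hN.eigenvalues_nonneg i)

lemma aux_trace_mul_vecMulVec {n : Type*} [Fintype n] (B : Matrix n n ℝ) (u : n → ℝ) :
    (B * vecMulVec u u).trace = u ⬝ᵥ (B *ᵥ u) := by
  simp only [Matrix.trace, Matrix.diag, Matrix.mul_apply, vecMulVec_apply, dotProduct, mulVec]
  refine Finset.sum_congr rfl fun i _ => ?_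
  rw [Finset.mul_sum]
  exact Finset.sum_congr rfl fun j _ => by ring


set_option maxHeartbeats 1000000 in
/-- Key intermediate determinant estimate of Lemma 6: for `A` positive definite and
`w_h² = φ_hᵀ A⁻¹ φ_h`,
`det(A + ∑ φ_h φ_hᵀ) ≥ det(A)(1 + ∑ w_h²) ≥ det(A) ∏ (1 + w_h²)^{1/H}`. -/

theorem batched_determinant_growth {d : ℕ} (H : ℕ) (hH : 1 ≤ H)
    (A : Matrix (Fin d) (Fin d) ℝ) (hA : A.PosDef)
    (φ : Fin H → Fin d → ℝ) (w : Fin H → ℝ)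
    (hw : ∀ h, w h = φ h ⬝ᵥ (A⁻¹ *ᵥ φ h)) :
    A.det * (1 + ∑ h, w h) ≤ (A + ∑ h, vecMulVec (φ h) (φ h)).det ∧
      A.det * ∏ h, (1 + w h) ^ ((1 : ℝ) / H) ≤ A.det * (1 + ∑ h, w h) := by
  have hdetA : 0 < A.det := hA.det_pos
  -- nonnegativity of w
  have hw0 : ∀ h, 0 ≤ w h := by
    intro h
    rw [hw h]
    simpa using hA.inv.posSemidef.dotProduct_mulVec_nonneg (φ h)
  set M : Matrix (Fin d) (Fin d) ℝ := ∑ h, vecMulVec (φ h) (φ h) with hMdef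
  have hM : M.PosSemidef := by
    apply Finset.sum_induction _ _ (fun a b ha hb => ha.add hb) Matrix.PosSemidef.zero
    intro h _
    refine Matrix.PosSemidef.of_dotProduct_mulVec_nonneg ?_ ?_
    · ext i j
      simp [vecMulVec_apply, conjTranspose_apply, mul_comm]
    · intro x
      have : vecMulVec (φ h) (φ h) *ᵥ x = (φ h ⬝ᵥ x) • φ h := by
        ext i
        simp only [vecMulVec_apply, mulVec, dotProduct, Pi.smul_apply, smul_eq_mul]
        rw [Finset.sum_mul]
        exact Finset.sum_congr rfl fun j _ => by ring
      rw [this]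
      simp only [star_trivial, dotProduct_smul, smul_eq_mul]
      have : x ⬝ᵥ φ h = φ h ⬝ᵥ x := dotProduct_comm _ _
      rw [this]
      exact mul_self_nonneg _
  open scoped MatrixOrder in
  set S : Matrix (Fin d) (Fin d) ℝ := CFC.sqrt A with hSdef
  open scoped MatrixOrder in
  have hS : S.PosSemidef := (CFC.sqrt_nonneg A).posSemidef
  open scoped MatrixOrder in
  have hSS : S * S = A := CFC.sqrt_mul_sqrt_self A hA.posSemidef.nonneg
  have hdetS : S.det * S.det = A.det := by rw [← det_mul, hSS]
  have hdetSne : IsUnit S.det := by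
    refine isUnit_iff_ne_zero.mpr fun h0 => ?_
    rw [h0, mul_zero] at hdetS
    exact absurd hdetS.symm hdetA.ne'
  have hSinv : S * S⁻¹ = 1 := mul_nonsing_inv S hdetSne
  have hSinv' : S⁻¹ * S = 1 := nonsing_inv_mul S hdetSne
  set N : Matrix (Fin d) (Fin d) ℝ := S⁻¹ * M * S⁻¹ with hNdef
  have hN : N.PosSemidef := by
    have h1 : (S⁻¹)ᴴ = S⁻¹ := hS.1.inv
    have := hM.mul_mul_conjTranspose_same S⁻¹
    rwa [h1] at this
  have hAM : A + M = S * (1 + N) * S := by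
    rw [hNdef, mul_add, add_mul, mul_one, hSS]
    congr 1
    rw [← mul_assoc, ← mul_assoc, hSinv, one_mul, mul_assoc, hSinv', mul_one]
  have hAinv : S⁻¹ * S⁻¹ = A⁻¹ := by rw [← hSS, Matrix.mul_inv_rev]
  have htrN : N.trace = ∑ h, w h := by
    rw [hNdef, trace_mul_cycle, hAinv, Finset.mul_sum, trace_sum]
    refine Finset.sum_congr rfl fun h _ => ?_
    rw [hw h, aux_trace_mul_vecMulVec]
  have hdetAM : (A + M).det = A.det * (1 + N).det := by
    rw [hAM, det_mul, det_mul, mul_comm, ← mul_assoc, hdetS]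
  constructor
  · rw [hdetAM, ← htrN]
    exact mul_le_mul_of_nonneg_left (aux_det_one_add hN) hdetA.le
  · refine mul_le_mul_of_nonneg_left ?_ hdetA.le
    have hsum0 : 0 ≤ ∑ h, w h := Finset.sum_nonneg fun h _ => hw0 h
    have hle : ∀ h : Fin H, 1 + w h ≤ 1 + ∑ h', w h' := fun h =>
      add_le_add_right (Finset.single_le_sum (fun h' _ => hw0 h') (Finset.mem_univ h)) 1
    calc ∏ h, (1 + w h) ^ ((1 : ℝ) / H)
        ≤ ∏ _h : Fin H, (1 + ∑ h', w h') ^ ((1 : ℝ) / H) := by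
          refine Finset.prod_le_prod (fun h _ => Real.rpow_nonneg (by linarith [hw0 h]) _)
            (fun h _ => Real.rpow_le_rpow (by linarith [hw0 h]) (hle h) (by positivity))
      _ = (1 + ∑ h', w h') := by
          rw [Finset.prod_const, Finset.card_univ, Fintype.card_fin,
            ← Real.rpow_natCast ((1 + ∑ h', w h') ^ ((1:ℝ)/H)) H,
            ← Real.rpow_mul (by linarith)]
          rw [one_div, inv_mul_cancel₀ (by exact_mod_cast Nat.pos_of_ne_zero (by omega) |>.ne'),
            Real.rpow_one]
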